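/- Let G be a group, k and N natural numbers, and H₁, …, H_k subgroups of G that pairwise commute elementwise (for i ≠ j, every element of H_i commutes with every element of H_j). Suppose for each i the element f_i ∈ G can be written as a product of N commutators of elements of H_i, say f_i = [g_{i,1}, g_{i,2}]⋯[g_{i,2N−1}, g_{i,2N}] with all g_{i,j} ∈ H_i. Then the product f = f₁f₂⋯f_k can be written as a product of N commutators in G; explicitly, f = ∏_{j=1}^{2N−1, j odd} [∏_{i=1}^{k} g_{i,j}, ∏_{i=1}^{k} g_{i,j+1}]. -/

import Mathlib

open scoped commutatorElement

private lemma comm_commutator {G : Type*} [Group G] {x c d : G}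
    (hc : Commute x c) (hd : Commute x d) : Commute x ⁅c, d⁆ := by
  rw [commutatorElement_def]
  exact ((hc.mul_right hd).mul_right hc.inv_right).mul_right hd.inv_right

private lemma commutator_mul_split {G : Type*} [Group G] {a b c d : G}
    (hca : Commute c a) (hcb : Commute c b) (hda : Commute d a) (hdb : Commute d b) :
    ⁅a * c, b * d⁆ = ⁅a, b⁆ * ⁅c, d⁆ := by
  have hK : Commute ⁅c, d⁆ (a⁻¹ * b⁻¹) :=
    ((comm_commutator hca.symm hda.symm).symm.inv_right).mul_right
      ((comm_commutator hcb.symm hdb.symm).symm.inv_right)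
  have e1 : a * c * (b * d) = a * b * (c * d) := hcb.mul_mul_mul_comm a d
  have e2 : c⁻¹ * a⁻¹ * (d⁻¹ * b⁻¹) = c⁻¹ * d⁻¹ * (a⁻¹ * b⁻¹) :=
    (hda.inv_inv.symm).mul_mul_mul_comm c⁻¹ b⁻¹
  calc ⁅a * c, b * d⁆
      = a * c * (b * d) * ((a * c)⁻¹ * (b * d)⁻¹) := by
        rw [commutatorElement_def, mul_assoc]
    _ = a * b * (c * d) * (c⁻¹ * a⁻¹ * (d⁻¹ * b⁻¹)) := by
        rw [e1, mul_inv_rev a c, mul_inv_rev b d]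
    _ = a * b * (c * d) * (c⁻¹ * d⁻¹ * (a⁻¹ * b⁻¹)) := by rw [e2]
    _ = a * b * (c * d * c⁻¹ * d⁻¹) * (a⁻¹ * b⁻¹) := by group
    _ = a * b * ⁅c, d⁆ * (a⁻¹ * b⁻¹) := by rw [commutatorElement_def]
    _ = a * b * (a⁻¹ * b⁻¹) * ⁅c, d⁆ := by
        rw [mul_assoc (a*b), mul_assoc (a*b), hK.eq]
    _ = ⁅a, b⁆ * ⁅c, d⁆ := by rw [commutatorElement_def]; group

private lemma prod_mul_split {G : Type*} [Group G] (N : ℕ) (X Y : ℕ → G)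
    (h : ∀ s t, s < N → t < N → Commute (Y s) (X t)) :
    ((List.range N).map (fun t => X t * Y t)).prod =
      ((List.range N).map X).prod * ((List.range N).map Y).prod := by
  induction N with
  | zero => simp
  | succ n ih =>
    simp only [List.range_succ, List.map_append, List.prod_append, List.map_cons,
      List.prod_cons, List.map_nil, List.prod_nil, mul_one]
    rw [ih (fun s t hs ht => h s t (hs.trans (Nat.lt_succ_self n)) (ht.trans (Nat.lt_succ_self n)))]
    have hc : Commute (((List.range n).map Y).prod) (X n) :=
      Commute.list_prod_left _ _ (by
        intro x hx
        obtain ⟨s, hs, rfl⟩ := List.mem_map.mp hx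
        exact h s n (Nat.lt_succ_of_lt (List.mem_range.mp hs)) (Nat.lt_succ_self n))
    calc ((List.range n).map X).prod * ((List.range n).map Y).prod * (X n * Y n)
        = ((List.range n).map X).prod * (((List.range n).map Y).prod * X n) * Y n := by group
      _ = ((List.range n).map X).prod * (X n * ((List.range n).map Y).prod) * Y n := by rw [hc.eq]
      _ = ((List.range n).map X).prod * X n * (((List.range n).map Y).prod * Y n) := by group

theorem product_of_commutators_in_commuting_subgroups
    {G : Type*} [Group G] (k N : ℕ) (H : ℕ → Subgroup G)
    (hcomm : ∀ i j, i < k → j < k → i ≠ j →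
      ∀ x ∈ H i, ∀ y ∈ H j, Commute x y)
    (g : ℕ → ℕ → G)
    (hmem : ∀ i j, i < k → j < 2 * N → g i j ∈ H i) :
    ((List.range k).map (fun i =>
        ((List.range N).map (fun t => ⁅g i (2 * t), g i (2 * t + 1)⁆)).prod)).prod =
      ((List.range N).map (fun t =>
        ⁅((List.range k).map (fun i => g i (2 * t))).prod,
          ((List.range k).map (fun i => g i (2 * t + 1))).prod⁆)).prod := by
  induction k with
  | zero => simp
  | succ k ih =>
    have hcol : ∀ (j j' : ℕ), j < 2 * N → j' < 2 * N →
        Commute (g k j) (((List.range k).map (fun i => g i j')).prod) := by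
      intro j j' hj hj'
      refine Commute.list_prod_right _ _ ?_
      intro x hx
      obtain ⟨i, hi, rfl⟩ := List.mem_map.mp hx
      have hik := List.mem_range.mp hi
      exact hcomm k i (Nat.lt_succ_self k) (hik.trans (Nat.lt_succ_self k))
        (Nat.ne_of_gt hik) _ (hmem k j (Nat.lt_succ_self k) hj) _
        (hmem i j' (hik.trans (Nat.lt_succ_self k)) hj')
    have ht2 : ∀ t, t < N → 2 * t < 2 * N := fun t ht => by omega
    have ht2' : ∀ t, t < N → 2 * t + 1 < 2 * N := fun t ht => by omega
    simp only [List.range_succ, List.map_append, List.prod_append, List.map_cons,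
      List.prod_cons, List.map_nil, List.prod_nil, mul_one]
    rw [ih (fun i j hi hj hij => hcomm i j (hi.trans (Nat.lt_succ_self k))
          (hj.trans (Nat.lt_succ_self k)) hij)
        (fun i j hi hj => hmem i j (hi.trans (Nat.lt_succ_self k)) hj)]
    have step1 : ((List.range N).map (fun t =>
        ⁅((List.range k).map (fun i => g i (2 * t))).prod * g k (2 * t),
          ((List.range k).map (fun i => g i (2 * t + 1))).prod * g k (2 * t + 1)⁆)).prod
        = ((List.range N).map (fun t =>
            ⁅((List.range k).map (fun i => g i (2 * t))).prod,
              ((List.range k).map (fun i => g i (2 * t + 1))).prod⁆ *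
            ⁅g k (2 * t), g k (2 * t + 1)⁆)).prod := by
      apply congrArg
      apply List.map_congr_left
      intro t htm
      have ht := List.mem_range.mp htm
      exact commutator_mul_split (hcol _ _ (ht2 t ht) (ht2 t ht))
        (hcol _ _ (ht2 t ht) (ht2' t ht))
        (hcol _ _ (ht2' t ht) (ht2 t ht))
        (hcol _ _ (ht2' t ht) (ht2' t ht))
    rw [step1, prod_mul_split]
    intro s t hs ht
    have hA : Commute ⁅g k (2 * s), g k (2 * s + 1)⁆
        (((List.range k).map (fun i => g i (2 * t))).prod) :=
      (comm_commutator (hcol _ _ (ht2 s hs) (ht2 t ht)).symm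
        (hcol _ _ (ht2' s hs) (ht2 t ht)).symm).symm
    have hB : Commute ⁅g k (2 * s), g k (2 * s + 1)⁆
        (((List.range k).map (fun i => g i (2 * t + 1))).prod) :=
      (comm_commutator (hcol _ _ (ht2 s hs) (ht2' t ht)).symm
        (hcol _ _ (ht2' s hs) (ht2' t ht)).symm).symm
    exact comm_commutator hA hB
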